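/- Let $P = (p_n)$ and $Q = (q_n)$ be sequences of integers with $p_n, q_n \geq 2$ such that there exists $M$ with $p_n \leq q_n$ for all $n \geq M$. Then $\psi_{P,Q}$ is monotone (in fact increasing) on the interval $\left[ \sum_{n=1}^{M} \frac{p_n - 1}{p_1 \cdots p_n}, \; \sum_{n=1}^{M} \frac{p_n - 1}{p_1 \cdots p_n} + \frac{1}{p_1 \cdots p_{M+1}} \right]$. -/

import Mathlib

noncomputable def cantorDigit (p : ℕ → ℕ) (x : ℝ) (n : ℕ) : ℕ :=
  (⌊(∏ i ∈ Finset.range (n + 1), (p i : ℝ)) * Int.fract x⌋).toNat % p n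

noncomputable def psiPQ (p q : ℕ → ℕ) (x : ℝ) : ℝ :=
  ∑' n : ℕ, (min (cantorDigit p x n) (q n - 1) : ℝ) / ∏ i ∈ Finset.range (n + 1), (q i : ℝ)

open Finset

namespace Stmt12Aux

noncomputable def Pr (p : ℕ → ℕ) (n : ℕ) : ℝ := ∏ i ∈ Finset.range n, (p i : ℝ)

lemma Pr_pos {p : ℕ → ℕ} (hp : ∀ n, 2 ≤ p n) (n : ℕ) : 0 < Pr p n :=
  Finset.prod_pos fun i _ => by have := hp i; exact_mod_cast (by omega : 0 < p i)

lemma Pr_succ (p : ℕ → ℕ) (n : ℕ) : Pr p (n + 1) = Pr p n * p n :=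
  Finset.prod_range_succ _ _

lemma two_pow_le_Pr {p : ℕ → ℕ} (hp : ∀ n, 2 ≤ p n) (n : ℕ) : (2:ℝ)^n ≤ Pr p n := by
  have : (2:ℝ)^n = ∏ _i ∈ Finset.range n, (2:ℝ) := by
    rw [Finset.prod_const, Finset.card_range]
  rw [this, Pr]
  exact Finset.prod_le_prod (fun i _ => by norm_num) (fun i _ => by exact_mod_cast hp i)

lemma one_le_Pr {p : ℕ → ℕ} (hp : ∀ n, 2 ≤ p n) (n : ℕ) : 1 ≤ Pr p n :=
  le_trans (one_le_pow₀ (by norm_num)) (two_pow_le_Pr hp n)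

lemma Pr_mono {p : ℕ → ℕ} (hp : ∀ n, 2 ≤ p n) {m n : ℕ} (h : m ≤ n) : Pr p m ≤ Pr p n := by
  have h2 : Pr p m * ∏ i ∈ Finset.Ico m n, (p i:ℝ) = Pr p n :=
    Finset.prod_range_mul_prod_Ico _ h
  have h3 : (1:ℝ) ≤ ∏ i ∈ Finset.Ico m n, (p i:ℝ) := by
    have := Finset.prod_le_prod (s := Finset.Ico m n) (f := fun _ => (1:ℝ))
      (g := fun i => (p i:ℝ)) (by intros; norm_num)
      (by intro i _; show (1:ℝ) ≤ (p i:ℝ); exact_mod_cast (by have := hp i; omega : 1 ≤ p i))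
    simpa using this
  nlinarith [Pr_pos hp m]

lemma inv_Pr_le {p : ℕ → ℕ} (hp : ∀ n, 2 ≤ p n) (n : ℕ) : 1 / Pr p n ≤ (1/2:ℝ)^n := by
  rw [div_pow, one_pow]
  exact one_div_le_one_div_of_le (by positivity) (two_pow_le_Pr hp n)

lemma sum_left {p : ℕ → ℕ} (hp : ∀ n, 2 ≤ p n) (M : ℕ) :
    ∑ n ∈ Finset.range M, ((p n : ℝ) - 1) / Pr p (n+1) = 1 - 1 / Pr p M := by
  induction M with
  | zero => simp [Pr]
  | succ M ih =>
    rw [Finset.sum_range_succ, ih, Pr_succ]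
    have h1 : Pr p M ≠ 0 := (Pr_pos hp M).ne'
    have h2 : (p M : ℝ) ≠ 0 := by have := hp M; positivity
    field_simp
    ring

noncomputable def Fl (p : ℕ → ℕ) (x : ℝ) (k : ℕ) : ℤ := ⌊Pr p k * x⌋

lemma Fl_zero {p : ℕ → ℕ} {x : ℝ} (hx : x ∈ Set.Ico (0:ℝ) 1) : Fl p x 0 = 0 := by
  have : Pr p 0 = 1 := Finset.prod_range_zero _
  rw [Fl, this, one_mul]
  exact Int.floor_eq_zero_iff.mpr hx

lemma Fl_nonneg {p : ℕ → ℕ} (hp : ∀ n, 2 ≤ p n) {x : ℝ} (hx : 0 ≤ x) (k : ℕ) :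
    0 ≤ Fl p x k :=
  Int.floor_nonneg.mpr (mul_nonneg (Pr_pos hp k).le hx)

lemma Fl_mono {p : ℕ → ℕ} (hp : ∀ n, 2 ≤ p n) {x y : ℝ} (hxy : x ≤ y) (k : ℕ) :
    Fl p x k ≤ Fl p y k :=
  Int.floor_le_floor (mul_le_mul_of_nonneg_left hxy (Pr_pos hp k).le)

lemma Fl_step_lb {p : ℕ → ℕ} (hp : ∀ n, 2 ≤ p n) (x : ℝ) (n : ℕ) :
    (p n : ℤ) * Fl p x n ≤ Fl p x (n+1) := by
  show (p n : ℤ) * Fl p x n ≤ ⌊Pr p (n+1) * x⌋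
  rw [Int.le_floor]
  have h1 : (Fl p x n : ℝ) ≤ Pr p n * x := Int.floor_le _
  have h2 : (0:ℝ) ≤ (p n : ℝ) := by positivity
  push_cast
  calc (p n : ℝ) * (Fl p x n : ℝ) ≤ (p n : ℝ) * (Pr p n * x) := by nlinarith
    _ = Pr p (n+1) * x := by rw [Pr_succ]; ring

lemma Fl_step_ub {p : ℕ → ℕ} (hp : ∀ n, 2 ≤ p n) (x : ℝ) (n : ℕ) :
    Fl p x (n+1) < (p n : ℤ) * (Fl p x n + 1) := by
  show ⌊Pr p (n+1) * x⌋ < (p n : ℤ) * (Fl p x n + 1)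
  rw [Int.floor_lt]
  have h1 : Pr p n * x < (Fl p x n : ℝ) + 1 := Int.lt_floor_add_one _
  have h2 : (0:ℝ) < (p n : ℝ) := by
    have := hp n; exact_mod_cast (by omega : 0 < p n)
  push_cast
  calc Pr p (n+1) * x = (p n : ℝ) * (Pr p n * x) := by rw [Pr_succ]; ring
    _ < (p n : ℝ) * ((Fl p x n : ℝ) + 1) := by nlinarith

lemma digit_int {p : ℕ → ℕ} (hp : ∀ n, 2 ≤ p n) {x : ℝ} (hx : x ∈ Set.Ico (0:ℝ) 1) (n : ℕ) :
    (cantorDigit p x n : ℤ) = Fl p x (n+1) - (p n : ℤ) * Fl p x n := by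
  have hfr : Int.fract x = x := Int.fract_eq_self.mpr hx
  have h0 : 0 ≤ Fl p x (n+1) := Fl_nonneg hp hx.1 _
  have hcd : (cantorDigit p x n : ℤ) = Fl p x (n+1) % (p n : ℤ) := by
    have h0' : 0 ≤ ⌊(∏ i ∈ Finset.range (n+1), (p i : ℝ)) * x⌋ := h0
    unfold cantorDigit
    rw [hfr]
    push_cast [Int.toNat_of_nonneg h0']
    rfl
  have h1 := Fl_step_lb hp x n
  have h2 := Fl_step_ub hp x n
  rw [mul_add, mul_one] at h2
  set r := Fl p x (n+1) - (p n : ℤ) * Fl p x n with hr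
  have heq : Fl p x (n+1) = r + (p n : ℤ) * Fl p x n := by rw [hr]; ring
  rw [hcd, heq, Int.add_mul_emod_self_left, Int.emod_eq_of_lt (by linarith) (by linarith)]

lemma digit_lt {p : ℕ → ℕ} (hp : ∀ n, 2 ≤ p n) (x : ℝ) (n : ℕ) :
    cantorDigit p x n < p n :=
  Nat.mod_lt _ (by have := hp n; omega)

lemma summable_aux {q : ℕ → ℕ} (hq : ∀ n, 2 ≤ q n) (f : ℕ → ℝ)
    (h0 : ∀ n, 0 ≤ f n) (h1 : ∀ n, f n ≤ (q n : ℝ) - 1) :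
    Summable (fun n => f n / Pr q (n+1)) := by
  have hg : Summable (fun n : ℕ => (1/2:ℝ)^n) :=
    summable_geometric_of_lt_one (by norm_num) (by norm_num)
  refine Summable.of_nonneg_of_le (fun n => div_nonneg (h0 n) (Pr_pos hq _).le) (fun n => ?_) hg
  have hq0 : (0:ℝ) < (q n : ℝ) := by exact_mod_cast (by have := hq n; omega : 0 < q n)
  calc f n / Pr q (n+1) ≤ (q n : ℝ) / Pr q (n+1) := by
        gcongr
        · exact (Pr_pos hq _).le
        · linarith [h1 n]
    _ = 1 / Pr q n := by
        have h1 : Pr q n ≠ 0 := (Pr_pos hq n).ne'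
        have h2 : (q n : ℝ) ≠ 0 := hq0.ne'
        rw [Pr_succ]
        field_simp
    _ ≤ (1/2:ℝ)^n := inv_Pr_le hq n

lemma hasSum_tail {q : ℕ → ℕ} (hq : ∀ n, 2 ≤ q n) (N : ℕ) :
    HasSum (fun k : ℕ => ((q (N+k) : ℝ) - 1) / Pr q (N+k+1)) (1 / Pr q N) := by
  have key : ∀ k : ℕ, ((q (N+k) : ℝ) - 1) / Pr q (N+k+1)
      = 1 / Pr q (N+k) - 1 / Pr q (N+k+1) := by
    intro k
    have h1 : Pr q (N+k) ≠ 0 := (Pr_pos hq _).ne'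
    have h2 : (q (N+k) : ℝ) ≠ 0 := by have := hq (N+k); positivity
    rw [Pr_succ]
    field_simp
  have hnn : ∀ k : ℕ, 0 ≤ ((q (N+k) : ℝ) - 1) / Pr q (N+k+1) := by
    intro k
    have : (1:ℝ) ≤ (q (N+k) : ℝ) := by exact_mod_cast (by have := hq (N+k); omega : 1 ≤ q (N+k))
    exact div_nonneg (by linarith) (Pr_pos hq _).le
  rw [hasSum_iff_tendsto_nat_of_nonneg hnn]
  have hps : ∀ K : ℕ, ∑ k ∈ Finset.range K, ((q (N+k) : ℝ) - 1) / Pr q (N+k+1)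
      = 1 / Pr q N - 1 / Pr q (N+K) := by
    intro K
    simp only [key]
    exact Finset.sum_range_sub' (fun k => 1 / Pr q (N+k)) K
  simp only [hps]
  have htend : Filter.Tendsto (fun K : ℕ => 1 / Pr q (N+K)) Filter.atTop (nhds 0) := by
    have h2 : Filter.Tendsto (fun K : ℕ => (1/2:ℝ)^K) Filter.atTop (nhds 0) :=
      tendsto_pow_atTop_nhds_zero_of_lt_one (by norm_num) (by norm_num)
    refine squeeze_zero (fun K => div_nonneg (by norm_num) (Pr_pos hq _).le) (fun K => ?_) h2
    exact le_trans (inv_Pr_le hq (N+K))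
      (pow_le_pow_of_le_one (by norm_num) (by norm_num) (by omega))
  have := Filter.Tendsto.const_sub (1 / Pr q N) htend
  simpa using this

lemma Fl_frozen {p : ℕ → ℕ} (hp : ∀ n, 2 ≤ p n) {M : ℕ} {x : ℝ}
    (hx1 : 1 - 1 / Pr p M ≤ x) (hx2 : x ≤ 1 - 1 / Pr p M + 1 / Pr p (M+1))
    {n : ℕ} (hn : n < M) :
    Fl p x (n+1) = (∏ i ∈ Finset.range (n+1), (p i : ℤ)) - 1 := by
  have hPn := Pr_pos hp (n+1)
  have hPM := Pr_pos hp M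
  have hPM1 := Pr_pos hp (M+1)
  have hcast : (Int.cast (∏ i ∈ Finset.range (n+1), (p i : ℤ)) : ℝ) = Pr p (n+1) := by
    push_cast [Pr]
    rfl
  rw [Fl, Int.floor_eq_iff]
  constructor
  · rw [Int.cast_sub, Int.cast_one, hcast]
    have hle : Pr p (n+1) ≤ Pr p M := Pr_mono hp (by omega)
    have h1 : Pr p (n+1) * (1 - 1/Pr p M) ≤ Pr p (n+1) * x := by nlinarith
    have h2 : Pr p (n+1) / Pr p M ≤ 1 := by rw [div_le_one hPM]; exact hle
    have h3 : Pr p (n+1) * (1 - 1/Pr p M) = Pr p (n+1) - Pr p (n+1)/Pr p M := by ring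
    linarith
  · rw [Int.cast_sub, Int.cast_one, hcast]
    have hb : 1 - 1/Pr p M + 1/Pr p (M+1) < 1 := by
      have hlt : Pr p M < Pr p (M+1) := by
        rw [Pr_succ]
        nlinarith [show (2:ℝ) ≤ (p M:ℝ) from by exact_mod_cast hp M]
      have := one_div_lt_one_div_of_lt hPM hlt
      linarith
    nlinarith

lemma exists_small_digit {p : ℕ → ℕ} (hp : ∀ n, 2 ≤ p n) {x : ℝ}
    (hx : x ∈ Set.Ico (0:ℝ) 1) (n₀ : ℕ) :
    ∃ m, n₀ < m ∧ cantorDigit p x m + 1 < p m := by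
  by_contra hcon
  push_neg at hcon
  have hdig : ∀ m, n₀ < m → (cantorDigit p x m : ℤ) = (p m : ℤ) - 1 := by
    intro m hm
    have h1 := hcon m hm
    have h2 := digit_lt hp x m
    push_cast
    omega
  have hrec : ∀ k : ℕ, (Fl p x (n₀+1) + 1) * (∏ i ∈ Finset.Ico (n₀+1) (n₀+1+k), (p i:ℤ)) - 1
      = Fl p x (n₀+1+k) := by
    intro k
    induction k with
    | zero => simp
    | succ k ih =>
      have hstep := digit_int hp hx (n₀+1+k)
      have hd := hdig (n₀+1+k) (by omega)
      have hprod : (∏ i ∈ Finset.Ico (n₀+1) (n₀+1+(k+1)), (p i:ℤ))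
          = (∏ i ∈ Finset.Ico (n₀+1) (n₀+1+k), (p i:ℤ)) * (p (n₀+1+k) : ℤ) := by
        rw [show n₀+1+(k+1) = (n₀+1+k)+1 from rfl]
        exact Finset.prod_Ico_succ_top (by omega) _
      have hFl : Fl p x (n₀+1+(k+1)) = (p (n₀+1+k):ℤ) * Fl p x (n₀+1+k) + ((p (n₀+1+k):ℤ) - 1) := by
        have : Fl p x (n₀+1+(k+1)) = Fl p x ((n₀+1+k)+1) := rfl
        rw [this]
        linarith [hstep, hd]
      rw [hFl, hprod, ← ih]
      ring
  set F := Fl p x (n₀+1) with hF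
  have hFlt : Pr p (n₀+1) * x < (F:ℝ) + 1 := Int.lt_floor_add_one _
  set δ := (F:ℝ) + 1 - Pr p (n₀+1) * x with hδ
  have hδpos : 0 < δ := by simp only [hδ]; linarith
  obtain ⟨k, hk⟩ := exists_pow_lt_of_lt_one hδpos (show (1/2:ℝ) < 1 by norm_num)
  set R : ℝ := ∏ i ∈ Finset.Ico (n₀+1) (n₀+1+k), (p i:ℝ) with hR
  have h2R : (2:ℝ)^k ≤ R := by
    have hcard : (2:ℝ)^k = ∏ _i ∈ Finset.Ico (n₀+1) (n₀+1+k), (2:ℝ) := by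
      rw [Finset.prod_const, Nat.card_Ico]
      congr 1
      omega
    rw [hcard, hR]
    exact Finset.prod_le_prod (fun i _ => by norm_num) (fun i _ => by exact_mod_cast hp i)
  have hRpos : (0:ℝ) < R := lt_of_lt_of_le (by positivity) h2R
  have hPrR : Pr p (n₀+1) * R = Pr p (n₀+1+k) := Finset.prod_range_mul_prod_Ico _ (by omega)
  -- Fl p x (n₀+1+k) ≤ Pr p (n₀+1+k) * x
  have hflle : (Fl p x (n₀+1+k) : ℝ) ≤ Pr p (n₀+1+k) * x := Int.floor_le _
  have hcast2 : ((F + 1) * (∏ i ∈ Finset.Ico (n₀+1) (n₀+1+k), (p i:ℤ)) - 1 : ℤ) = (Fl p x (n₀+1+k)) := hrec k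
  have hreal : ((F:ℝ) + 1) * R - 1 ≤ Pr p (n₀+1+k) * x := by
    have := congrArg (fun z : ℤ => (z : ℝ)) hcast2
    push_cast at this
    rw [← hR] at this
    linarith [hflle, this.le, this.ge]
  have hδR : δ * R ≤ 1 := by
    have : Pr p (n₀+1+k) * x = Pr p (n₀+1) * x * R := by rw [← hPrR]; ring
    rw [this] at hreal
    have : ((F:ℝ) + 1 - Pr p (n₀+1) * x) * R ≤ 1 := by nlinarith
    simpa [hδ] using this
  have : δ ≤ (1/2:ℝ)^k := by
    have h1 : δ ≤ 1 / R := by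
      rw [le_div_iff₀ hRpos]
      exact hδR
    have h2 : 1 / R ≤ (1/2:ℝ)^k := by
      rw [div_pow, one_pow]
      exact one_div_le_one_div_of_le (by positivity) h2R
    linarith
  linarith

end Stmt12Aux

open Stmt12Aux in
theorem stmt12 (p q : ℕ → ℕ) (hp : ∀ n, 2 ≤ p n) (hq : ∀ n, 2 ≤ q n)
    (M : ℕ) (hpq : ∀ n, M ≤ n → p n ≤ q n) :
    StrictMonoOn (psiPQ p q)
      (Set.Icc (∑ n ∈ Finset.range M, ((p n : ℝ) - 1) / ∏ i ∈ Finset.range (n + 1), (p i : ℝ))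
        ((∑ n ∈ Finset.range M, ((p n : ℝ) - 1) / ∏ i ∈ Finset.range (n + 1), (p i : ℝ)) +
          1 / ∏ i ∈ Finset.range (M + 1), (p i : ℝ))) := by
  intro x hx y hy hxy
  classical
  have hsum : (∑ n ∈ Finset.range M, ((p n : ℝ) - 1) / ∏ i ∈ Finset.range (n + 1), (p i : ℝ))
      = 1 - 1 / Pr p M := sum_left hp M
  have hbM : (∏ i ∈ Finset.range (M + 1), (p i : ℝ)) = Pr p (M+1) := rfl
  rw [Set.mem_Icc, hsum, hbM] at hx hy
  obtain ⟨hx1, hx2⟩ := hx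
  obtain ⟨hy1, hy2⟩ := hy
  have hPM := Pr_pos hp M
  have hPM1 := Pr_pos hp (M+1)
  have h1PM : 1 ≤ Pr p M := one_le_Pr hp M
  have hblt1 : 1 - 1 / Pr p M + 1 / Pr p (M+1) < 1 := by
    have hlt : Pr p M < Pr p (M+1) := by
      rw [Pr_succ]
      nlinarith [show (2:ℝ) ≤ (p M:ℝ) from by exact_mod_cast hp M]
    have := one_div_lt_one_div_of_lt hPM hlt
    linarith
  have hdivle : 1 / Pr p M ≤ 1 := by rw [div_le_one hPM]; exact h1PM
  have hx01 : x ∈ Set.Ico (0:ℝ) 1 := ⟨by linarith, by linarith⟩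
  have hy01 : y ∈ Set.Ico (0:ℝ) 1 := ⟨by linarith, by linarith⟩
  -- first index where floors differ
  have hex : ∃ n, Fl p x (n+1) < Fl p y (n+1) := by
    obtain ⟨k, hk⟩ := exists_pow_lt_of_lt_one (show (0:ℝ) < y - x by linarith)
      (show (1/2:ℝ) < 1 by norm_num)
    refine ⟨k, ?_⟩
    have h2 : (1:ℝ) ≤ Pr p (k+1) * (y - x) := by
      have hineq : (2:ℝ)^(k+1) ≤ Pr p (k+1) := two_pow_le_Pr hp (k+1)
      have hhalf : (1/2:ℝ)^(k+1) ≤ (1/2:ℝ)^k :=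
        pow_le_pow_of_le_one (by norm_num) (by norm_num) (by omega)
      have hlt2 : (1/2:ℝ)^(k+1) < y - x := lt_of_le_of_lt hhalf hk
      have hmul : (2:ℝ)^(k+1) * (1/2:ℝ)^(k+1) = 1 := by
        rw [← mul_pow]; norm_num
      nlinarith [Pr_pos hp (k+1), pow_pos (show (0:ℝ) < 1/2 by norm_num) (k+1)]
    have h3 : ((Fl p x (k+1) + 1 : ℤ) : ℝ) ≤ Pr p (k+1) * y := by
      have hfl : (Fl p x (k+1) : ℝ) ≤ Pr p (k+1) * x := Int.floor_le _
      push_cast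
      nlinarith
    have h4 : Fl p x (k+1) + 1 ≤ Fl p y (k+1) := Int.le_floor.mpr h3
    omega
  set n₀ := Nat.find hex with hn₀def
  have hn₀ : Fl p x (n₀+1) < Fl p y (n₀+1) := Nat.find_spec hex
  have hFleq : ∀ n < n₀, Fl p x (n+1) = Fl p y (n+1) := fun n h =>
    le_antisymm (Fl_mono hp hxy.le _) (not_lt.mp (Nat.find_min hex h))
  have hFleq' : ∀ n ≤ n₀, Fl p x n = Fl p y n := by
    intro n hn
    cases n with
    | zero => rw [Fl_zero hx01, Fl_zero hy01]
    | succ k => exact hFleq k (by omega)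
  have hMn₀ : M ≤ n₀ := by
    by_contra h
    push_neg at h
    have h1 := Fl_frozen hp hx1 hx2 h
    have h2 := Fl_frozen hp hy1 hy2 h
    rw [h1, h2] at hn₀
    exact lt_irrefl _ hn₀
  have hdeq : ∀ n < n₀, cantorDigit p x n = cantorDigit p y n := by
    intro n hn
    have h1 := digit_int hp hx01 n
    have h2 := digit_int hp hy01 n
    have h3 := hFleq n hn
    have h4 := hFleq' n (by omega)
    have : (cantorDigit p x n : ℤ) = (cantorDigit p y n : ℤ) := by
      rw [h1, h2, h3, h4]
    exact_mod_cast this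
  have hdlt : cantorDigit p x n₀ < cantorDigit p y n₀ := by
    have h1 := digit_int hp hx01 n₀
    have h2 := digit_int hp hy01 n₀
    have h4 := hFleq' n₀ le_rfl
    have : (cantorDigit p x n₀ : ℤ) < (cantorDigit p y n₀ : ℤ) := by
      rw [h1, h2, ← h4]
      linarith [hn₀]
    exact_mod_cast this
  -- index m with small digit of x
  obtain ⟨m, hn₀m, hsmall⟩ := exists_small_digit hp hx01 n₀
  have hn₀ne : n₀ ≠ m := by omega
  -- series setup
  set Sx : ℕ → ℝ := fun n => min (cantorDigit p x n : ℝ) ((q n:ℝ)-1) / Pr q (n+1) with hSxdef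
  set Sy : ℕ → ℝ := fun n => min (cantorDigit p y n : ℝ) ((q n:ℝ)-1) / Pr q (n+1) with hSydef
  have hq1 : ∀ n, (1:ℝ) ≤ (q n : ℝ) := fun n => by
    exact_mod_cast (by have := hq n; omega : 1 ≤ q n)
  have hmin0 : ∀ (z : ℝ) (n : ℕ), 0 ≤ min ((cantorDigit p z n : ℝ)) ((q n:ℝ)-1) := by
    intro z n
    exact le_min (by positivity) (by linarith [hq1 n])
  have hSx : Summable Sx := by
    rw [hSxdef]
    exact summable_aux hq _ (hmin0 x) (fun n => min_le_right _ _)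
  have hSy : Summable Sy := by
    rw [hSydef]
    exact summable_aux hq _ (hmin0 y) (fun n => min_le_right _ _)
  have hpsix : psiPQ p q x = ∑' n, Sx n := rfl
  have hpsiy : psiPQ p q y = ∑' n, Sy n := rfl
  -- min = digit for n ≥ M
  have hminz : ∀ (z : ℝ) (n : ℕ), M ≤ n →
      min ((cantorDigit p z n : ℝ)) ((q n:ℝ)-1) = (cantorDigit p z n : ℝ) := by
    intro z n hn
    apply min_eq_left
    have h1 := digit_lt hp z n
    have h2 := hpq n hn
    have h3 : cantorDigit p z n + 1 ≤ q n := by omega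
    have : ((cantorDigit p z n : ℝ)) + 1 ≤ (q n : ℝ) := by exact_mod_cast h3
    linarith
  -- the comparison function
  set c : ℕ → ℝ := fun n => (if n = n₀ ∨ n = m then 1/Pr q (n+1) else 0) -
    (if n₀ < n then ((q n:ℝ)-1)/Pr q (n+1) else 0) with hcdef
  have hc1 : HasSum (fun n : ℕ => if n = n₀ ∨ n = m then 1/Pr q (n+1) else (0:ℝ))
      (1/Pr q (n₀+1) + 1/Pr q (m+1)) := by
    have hvan : ∀ n ∉ ({n₀, m} : Finset ℕ),
        (if n = n₀ ∨ n = m then 1/Pr q (n+1) else (0:ℝ)) = 0 := by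
      intro n hn
      simp only [Finset.mem_insert, Finset.mem_singleton] at hn
      rw [if_neg]
      tauto
    have hs := hasSum_sum_of_ne_finset_zero (L := SummationFilter.unconditional ℕ) hvan
    have hval : ∑ n ∈ ({n₀, m} : Finset ℕ),
        (if n = n₀ ∨ n = m then 1/Pr q (n+1) else (0:ℝ))
        = 1/Pr q (n₀+1) + 1/Pr q (m+1) := by
      rw [Finset.sum_pair hn₀ne]
      simp
    rwa [hval] at hs
  have hc2 : HasSum (fun n : ℕ => if n₀ < n then ((q n:ℝ)-1)/Pr q (n+1) else 0)
      (1/Pr q (n₀+1)) := by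
    have htail := hasSum_tail hq (n₀+1)
    have hinj : Function.Injective (fun k : ℕ => n₀+1+k) := by
      intro a b h
      simpa using h
    have hvan : ∀ n ∉ Set.range (fun k : ℕ => n₀+1+k),
        (if n₀ < n then ((q n:ℝ)-1)/Pr q (n+1) else (0:ℝ)) = 0 := by
      intro n hn
      have : ¬ n₀ < n := by
        intro hlt
        exact hn ⟨n - (n₀+1), by show n₀+1+(n-(n₀+1)) = n; omega⟩
      rw [if_neg this]
    rw [← Function.Injective.hasSum_iff hinj hvan]
    have hcomp : ((fun n : ℕ => if n₀ < n then ((q n:ℝ)-1)/Pr q (n+1) else (0:ℝ)) ∘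
        (fun k : ℕ => n₀+1+k)) = fun k : ℕ => ((q (n₀+1+k):ℝ)-1)/Pr q (n₀+1+k+1) := by
      funext k
      simp only [Function.comp_apply]
      rw [if_pos (by omega)]
    rw [hcomp]
    exact htail
  have hcsum : HasSum c (1/Pr q (m+1)) := by
    have h := hc1.sub hc2
    rw [show 1/Pr q (n₀+1) + 1/Pr q (m+1) - 1/Pr q (n₀+1) = 1/Pr q (m+1) from by ring] at h
    exact h
  -- termwise comparison
  have hterm : ∀ n, c n ≤ Sy n - Sx n := by
    intro n
    rw [hcdef]
    simp only
    rcases lt_trichotomy n n₀ with h | h | h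
    · rw [if_neg (by omega), if_neg (by omega)]
      have heq : Sy n = Sx n := by
        rw [hSxdef, hSydef]
        simp only
        rw [hdeq n h]
      rw [heq]
      simp
    · subst h
      rw [if_pos (Or.inl rfl), if_neg (by omega)]
      have hPr := Pr_pos hq (n₀+1)
      have hdd : ((cantorDigit p x n₀ : ℝ)) + 1 ≤ (cantorDigit p y n₀ : ℝ) := by
        exact_mod_cast hdlt
      have heq : Sy n₀ - Sx n₀ =
          ((cantorDigit p y n₀ : ℝ) - (cantorDigit p x n₀ : ℝ))/Pr q (n₀+1) := by
        rw [hSxdef, hSydef]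
        simp only
        rw [hminz x n₀ hMn₀, hminz y n₀ hMn₀]
        ring
      rw [heq, sub_zero]
      apply div_le_div_of_nonneg_right ?_ hPr.le
      linarith
    · have hSy0 : 0 ≤ Sy n := by
        rw [hSydef]
        exact div_nonneg (hmin0 y n) (Pr_pos hq _).le
      have hPr := Pr_pos hq (n+1)
      rw [if_pos h]
      rcases eq_or_ne n m with hnm | hnm
      · subst hnm
        rw [if_pos (Or.inr rfl)]
        have hqm : p n ≤ q n := hpq n (by omega)
        have hxm2 : cantorDigit p x n + 2 ≤ q n := by
          have := hsmall
          omega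
        have hxm2' : (cantorDigit p x n : ℝ) ≤ (q n : ℝ) - 2 := by
          have : ((cantorDigit p x n : ℕ) : ℝ) + 2 ≤ (q n : ℝ) := by exact_mod_cast hxm2
          linarith
        have hSxle : Sx n ≤ ((q n:ℝ)-2)/Pr q (n+1) := by
          rw [hSxdef]
          simp only
          apply div_le_div_of_nonneg_right ?_ hPr.le
          exact le_trans (min_le_left _ _) hxm2'
        have hring : 1/Pr q (n+1) - ((q n:ℝ)-1)/Pr q (n+1) = -(((q n:ℝ)-2)/Pr q (n+1)) := by
          ring
        linarith
      · rw [if_neg (by omega)]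
        have hSxle : Sx n ≤ ((q n:ℝ)-1)/Pr q (n+1) := by
          rw [hSxdef]
          simp only
          apply div_le_div_of_nonneg_right (min_le_right _ _) hPr.le
        linarith
  -- conclude
  have hsub : Summable (fun n => Sy n - Sx n) := hSy.sub hSx
  have hge : 1/Pr q (m+1) ≤ ∑' n, (Sy n - Sx n) := by
    rw [← hcsum.tsum_eq]
    exact Summable.tsum_le_tsum hterm hcsum.summable hsub
  have hts : ∑' n, (Sy n - Sx n) = psiPQ p q y - psiPQ p q x := by
    rw [Summable.tsum_sub hSy hSx, hpsix, hpsiy]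
  have hpos : (0:ℝ) < 1/Pr q (m+1) := by
    have := Pr_pos hq (m+1)
    positivity
  rw [hts] at hge
  linarith
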